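/- Let g(z) = exp(-z)/(1 + exp(-z))^2 be the Fisher information weight of the logit model, and consider φ(t) = 4 t^2 g(t)^2 for t > 0, the determinant of the Fisher information of the symmetric two-point design at canonical points -t and t. Then: (i) the equation t · tanh(t/2) = 1 has a unique positive solution t*, and t* lies in the interval (1.543, 1.544); (ii) every maximizer t > 0 of φ satisfies t · tanh(t/2) = 1, so the D-optimal canonical points of the logit model are z_1* = -t* and z_2* = t* with t* ≈ 1.543. -/

import Mathlib

open Real

private lemma tanh_half (t : ℝ) :
    Real.tanh (t / 2) = (Real.exp t - 1) / (Real.exp t + 1) := by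
  have h : Real.exp t = Real.exp (t/2) * Real.exp (t/2) := by
    rw [← Real.exp_add]; ring_nf
  have h1 : (0:ℝ) < Real.exp (t/2) := Real.exp_pos _
  have h2 : (0:ℝ) < Real.exp (-(t/2)) := Real.exp_pos _
  have h3 : Real.exp (t/2) * Real.exp (-(t/2)) = 1 := by
    rw [← Real.exp_add]; simp
  rw [Real.tanh_eq_sinh_div_cosh, Real.sinh_eq, Real.cosh_eq, h]
  rw [div_eq_div_iff (by positivity) (by positivity)]
  linear_combination (-Real.exp (t/2)) * h3

private lemma exp_0543_lt : Real.exp 0.543 < 1.72117 := by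
  have h := Real.exp_bound' (x := 0.543) (by norm_num) (by norm_num) (n := 6) (by norm_num)
  refine h.trans_lt ?_
  simp only [Finset.sum_range_succ, Finset.sum_range_zero]
  norm_num [Nat.factorial]

private lemma exp_0544_gt : (1.7211 : ℝ) < Real.exp 0.544 := by
  have h := Real.sum_le_exp_of_nonneg (x := 0.544) (by norm_num) 8
  refine lt_of_lt_of_le ?_ h
  simp only [Finset.sum_range_succ, Finset.sum_range_zero]
  norm_num [Nat.factorial]

private lemma exp_1543_lt : Real.exp 1.543 < 4.6832 := by
  have h : (1.543:ℝ) = 1 + 0.543 := by norm_num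
  rw [h, Real.exp_add]
  calc Real.exp 1 * Real.exp 0.543 < 2.7182818286 * 1.72117 :=
        mul_lt_mul'' Real.exp_one_lt_d9 exp_0543_lt (Real.exp_pos _).le (Real.exp_pos _).le
    _ < 4.6832 := by norm_num

private lemma exp_1544_gt : (4.677 : ℝ) < Real.exp 1.544 := by
  have h : (1.544:ℝ) = 1 + 0.544 := by norm_num
  rw [h, Real.exp_add]
  calc (4.677:ℝ) < 2.7182818283 * 1.7211 := by norm_num
    _ < Real.exp 1 * Real.exp 0.544 :=
        mul_lt_mul'' Real.exp_one_gt_d9 exp_0544_gt (by norm_num) (by norm_num)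

private lemma f_lt_one : (1.543 : ℝ) * Real.tanh (1.543 / 2) < 1 := by
  rw [tanh_half]
  have hE := Real.exp_pos (1.543:ℝ)
  have h := exp_1543_lt
  rw [mul_div_assoc', div_lt_one (by positivity)]
  nlinarith

private lemma f_gt_one : (1 : ℝ) < 1.544 * Real.tanh (1.544 / 2) := by
  rw [tanh_half]
  have hE := Real.exp_pos (1.544:ℝ)
  have h := exp_1544_gt
  rw [mul_div_assoc', lt_div_iff₀ (by positivity)]
  nlinarith

private lemma f_mono : StrictMonoOn (fun t : ℝ => t * Real.tanh (t / 2)) (Set.Ici 0) := by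
  intro a ha b hb hab
  simp only [tanh_half]
  have hEa := Real.exp_pos a
  have hEb := Real.exp_pos b
  have hE : Real.exp a < Real.exp b := Real.exp_lt_exp.mpr hab
  have h1a : (1:ℝ) ≤ Real.exp a := Real.one_le_exp ha
  have htanh : (Real.exp a - 1) / (Real.exp a + 1) < (Real.exp b - 1) / (Real.exp b + 1) := by
    rw [div_lt_div_iff₀ (by positivity) (by positivity)]
    nlinarith
  have htnn : 0 ≤ (Real.exp a - 1) / (Real.exp a + 1) :=
    div_nonneg (by linarith) (by positivity)
  rcases (Set.mem_Ici.mp ha).eq_or_lt with h | h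
  · have hb0 : 0 < b := h ▸ hab
    have hb1 : (1:ℝ) < Real.exp b := by
      rw [← Real.exp_zero]; exact Real.exp_lt_exp.mpr hb0
    rw [← h, zero_mul]
    exact mul_pos hb0 (div_pos (by linarith) (by positivity))
  · exact mul_lt_mul'' hab htanh h.le htnn

private lemma f_cont : Continuous (fun t : ℝ => t * Real.tanh (t / 2)) := by
  have : (fun t : ℝ => t * Real.tanh (t / 2))
      = fun t : ℝ => t * ((Real.exp t - 1) / (Real.exp t + 1)) := by
    funext t; rw [tanh_half]
  rw [this]
  have h : ∀ t : ℝ, Real.exp t + 1 ≠ 0 := fun t => by positivity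
  exact continuous_id.mul
    (((Real.continuous_exp.sub continuous_const).div
      (Real.continuous_exp.add continuous_const) h))

theorem logit_optimal_design_point
    (g : ℝ → ℝ)
    (hg : ∀ z, g z = Real.exp (-z) / (1 + Real.exp (-z)) ^ 2) :
    (∃! t : ℝ, 0 < t ∧ t * Real.tanh (t / 2) = 1) ∧
    (∀ t : ℝ, 0 < t → t * Real.tanh (t / 2) = 1 → 1.543 < t ∧ t < 1.544) ∧
    (∀ t : ℝ, 0 < t →
      (∀ s : ℝ, 0 < s → 4 * s ^ 2 * g s ^ 2 ≤ 4 * t ^ 2 * g t ^ 2) →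
      t * Real.tanh (t / 2) = 1) := by
  -- bounds for any solution
  have hbnd : ∀ t : ℝ, 0 < t → t * Real.tanh (t / 2) = 1 → 1.543 < t ∧ t < 1.544 := by
    intro t ht heq
    constructor
    · by_contra h
      push_neg at h
      have := f_mono.monotoneOn (Set.mem_Ici.mpr ht.le) (by norm_num : (1.543:ℝ) ∈ Set.Ici 0) h
      rw [heq] at this
      exact absurd (this.trans_lt f_lt_one) (lt_irrefl 1)
    · by_contra h
      push_neg at h
      have := f_mono.monotoneOn (by norm_num : (1.544:ℝ) ∈ Set.Ici 0) (Set.mem_Ici.mpr ht.le) h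
      rw [heq] at this
      exact absurd (f_gt_one.trans_le this) (lt_irrefl 1)
  refine ⟨?_, hbnd, ?_⟩
  · -- existence and uniqueness
    have hIVT := intermediate_value_Icc (by norm_num : (1.543:ℝ) ≤ 1.544)
      (f_cont.continuousOn (s := Set.Icc 1.543 1.544))
    have h1 : (1:ℝ) ∈ Set.Icc ((1.543:ℝ) * Real.tanh (1.543/2)) ((1.544:ℝ) * Real.tanh (1.544/2)) :=
      ⟨f_lt_one.le, f_gt_one.le⟩
    obtain ⟨c, hc, hceq'⟩ := hIVT h1
    have hceq : c * Real.tanh (c / 2) = 1 := hceq'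
    refine ⟨c, ⟨lt_of_lt_of_le (by norm_num) hc.1, hceq⟩, ?_⟩
    intro y ⟨hy, hyeq⟩
    by_contra hne
    rcases lt_or_gt_of_ne hne with h | h
    · have := f_mono (Set.mem_Ici.mpr hy.le)
        (Set.mem_Ici.mpr ((lt_of_lt_of_le (by norm_num : (0:ℝ)<1.543) hc.1).le)) h
      simp only at this
      rw [hyeq, hceq] at this; exact lt_irrefl 1 this
    · have := f_mono
        (Set.mem_Ici.mpr ((lt_of_lt_of_le (by norm_num : (0:ℝ)<1.543) hc.1).le))
        (Set.mem_Ici.mpr hy.le) h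
      simp only at this
      rw [hyeq, hceq] at this; exact lt_irrefl 1 this
  · -- maximizer condition
    intro t ht hmax
    set u := Real.exp (-t) with hu
    have hupos : 0 < u := Real.exp_pos _
    -- F s = s * g s has a local max at t
    set F : ℝ → ℝ := fun s => s * (Real.exp (-s) / (1 + Real.exp (-s)) ^ 2) with hF
    have hgt : g t = u / (1 + u) ^ 2 := hg t
    have hgtpos : 0 < g t := by rw [hgt]; positivity
    have hlocmax : IsLocalMax F t := by
      have hmem : Set.Ioi (0:ℝ) ∈ nhds t := Ioi_mem_nhds ht
      filter_upwards [hmem] with s hs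
      have hs' : 0 < s := hs
      have h4 := hmax s hs'
      have hgs : g s = Real.exp (-s) / (1 + Real.exp (-s)) ^ 2 := hg s
      have hgspos : 0 < g s := by rw [hgs]; positivity
      have hFs : F s = s * g s := by rw [hF]; simp only [← hgs]
      have hFt : F t = t * g t := by rw [hF]; simp only [← hg t]
      rw [hFs, hFt]
      nlinarith [mul_pos hs' hgspos, mul_pos ht hgtpos]
    -- derivative of F at t
    have hneg : HasDerivAt (fun s : ℝ => -s) (-1) t := by
      exact (hasDerivAt_id' t).neg
    have hexp : HasDerivAt (fun s : ℝ => Real.exp (-s)) (Real.exp (-t) * (-1)) t :=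
      hneg.exp
    have hden := ((hasDerivAt_const t (1:ℝ)).add hexp).pow 2
    have hdenne : (1 + Real.exp (-t)) ^ 2 ≠ 0 := by positivity
    have hq := hexp.div hden hdenne
    have hFd : HasDerivAt F _ t := (hasDerivAt_id t).mul hq
    have hzero := hlocmax.hasDerivAt_eq_zero hFd
    rw [← hu] at hzero
    -- rewrite tanh
    have htanh : Real.tanh (t / 2) = (1 - u) / (1 + u) := by
      rw [tanh_half, hu]
      have hEu : Real.exp t * u = 1 := by rw [hu, ← Real.exp_add]; simp
      have hE := Real.exp_pos t
      rw [div_eq_div_iff (by positivity) (by positivity)]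
      linear_combination 2 * hEu
    rw [htanh]
    have h1u : (0:ℝ) < 1 + u := by positivity
    push_cast at hzero
    simp only [Pi.add_apply, Pi.pow_apply, id_eq, ← hu] at hzero
    field_simp at hzero ⊢
    have hfac : u * (1 + u) ^ 3 * ((1 + u) + t * (u - 1)) = 0 := by
      linear_combination (1 + u) ^ 3 * hzero
    rcases mul_eq_zero.mp hfac with h | h
    · exact absurd h (by positivity)
    · linear_combination -h
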